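/- Let T > 0 and let φ ∈ L¹(0,T) satisfy condition (H) with exponent θ ≥ 0. Then liminf_{λ → +∞} λ^{θ+1} |∫_0^T e^{−λt} φ(t) dt| > 0, where the liminf is over real λ → +∞. -/

import Mathlib

open MeasureTheory Real Set Filter Topology

lemma aux5
    (T T₀ Λ : ℝ) (hT₀ : 0 < T₀) (hT₀T : T₀ ≤ T) (hΛ : 0 < Λ)
    (φ : ℝ → ℝ) (hφ : IntegrableOn φ (Set.Ioo 0 T))
    (θ : ℝ) (hθ : 0 ≤ θ)
    (hpos : ∀ᵐ t ∂(MeasureTheory.volume.restrict (Set.Ioo (0:ℝ) T₀)), Λ * t ^ θ ≤ φ t) :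
    ∀ᶠ l in atTop, Λ * Real.exp (-2) / 2 ≤
      l ^ (θ + 1) * |∫ t in (0:ℝ)..T, Real.exp (-l * t) * φ t| := by
  set C : ℝ := ∫ t in Set.Ioo T₀ T, |φ t| with hC
  have hφT₀T : IntegrableOn (fun t => |φ t|) (Set.Ioo T₀ T) :=
    (hφ.mono_set (Set.Ioo_subset_Ioo hT₀.le le_rfl)).abs
  have hε : 0 < Λ * Real.exp (-2) / 2 := by positivity
  have htail : Tendsto (fun l : ℝ => l ^ (θ + 1) * Real.exp (-T₀ * l) * C) atTop (𝓝 0) := by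
    have := (tendsto_rpow_mul_exp_neg_mul_atTop_nhds_zero (θ + 1) T₀ hT₀).mul_const C
    simpa using this
  have hev1 : ∀ᶠ l : ℝ in atTop,
      l ^ (θ + 1) * Real.exp (-T₀ * l) * C < Λ * Real.exp (-2) / 2 :=
    htail.eventually_lt_const hε
  filter_upwards [hev1, eventually_ge_atTop (1 : ℝ), eventually_gt_atTop (2 / T₀)]
    with l htl hl1 hl2
  have hl0 : (0:ℝ) < l := lt_of_lt_of_le one_pos hl1
  -- basic facts
  have hEmeas : AEStronglyMeasurable (fun t => Real.exp (-l * t) * φ t)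
      (volume.restrict (Set.Ioo 0 T)) := by
    exact ((Real.continuous_exp.comp (continuous_const.mul continuous_id)).aestronglyMeasurable).mul
      hφ.aestronglyMeasurable
  have hEφ : IntegrableOn (fun t => Real.exp (-l * t) * φ t) (Set.Ioo 0 T) := by
    refine Integrable.mono' hφ.abs hEmeas ?_
    rw [ae_restrict_iff' measurableSet_Ioo]
    refine Filter.Eventually.of_forall fun t ht => ?_
    have h1 : Real.exp (-l * t) ≤ 1 := by
      apply Real.exp_le_one_iff.mpr
      nlinarith [ht.1]
    have h0 : 0 ≤ Real.exp (-l * t) := (Real.exp_pos _).le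
    rw [norm_mul, Real.norm_eq_abs, Real.norm_eq_abs, abs_of_nonneg h0]
    calc Real.exp (-l * t) * |φ t| ≤ 1 * |φ t| :=
          mul_le_mul_of_nonneg_right h1 (abs_nonneg _)
      _ = |φ t| := one_mul _
  have hint1 : IntervalIntegrable (fun t => Real.exp (-l * t) * φ t) volume 0 T₀ := by
    rw [intervalIntegrable_iff_integrableOn_Ioc_of_le hT₀.le,
      integrableOn_Ioc_iff_integrableOn_Ioo]
    exact hEφ.mono_set (Set.Ioo_subset_Ioo le_rfl hT₀T)
  have hint2 : IntervalIntegrable (fun t => Real.exp (-l * t) * φ t) volume T₀ T := by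
    rw [intervalIntegrable_iff_integrableOn_Ioc_of_le hT₀T,
      integrableOn_Ioc_iff_integrableOn_Ioo]
    exact hEφ.mono_set (Set.Ioo_subset_Ioo hT₀.le le_rfl)
  have hsplit : (∫ t in (0:ℝ)..T, Real.exp (-l * t) * φ t) =
      (∫ t in (0:ℝ)..T₀, Real.exp (-l * t) * φ t) +
      (∫ t in T₀..T, Real.exp (-l * t) * φ t) :=
    (intervalIntegral.integral_add_adjacent_intervals hint1 hint2).symm
  set A := ∫ t in (0:ℝ)..T₀, Real.exp (-l * t) * φ t with hA
  set B := ∫ t in T₀..T, Real.exp (-l * t) * φ t with hB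
  -- the comparison function g
  set g : ℝ → ℝ := fun t => Real.exp (-l * t) * (Λ * t ^ θ) with hg
  have hgmeas : AEStronglyMeasurable g volume := by
    apply Measurable.aestronglyMeasurable
    fun_prop
  have hgnonneg : ∀ t ∈ Set.Ioo (0:ℝ) T₀, 0 ≤ g t := by
    intro t ht
    have := Real.rpow_nonneg ht.1.le θ
    positivity
  have hgint : IntegrableOn g (Set.Ioo (0:ℝ) T₀) := by
    apply Measure.integrableOn_of_bounded (M := Λ * T₀ ^ θ)
    · exact ((measure_mono (Set.Ioo_subset_Ioo le_rfl hT₀T)).trans_lt measure_Ioo_lt_top).ne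
    · exact hgmeas
    · rw [ae_restrict_iff' measurableSet_Ioo]
      refine Filter.Eventually.of_forall fun t ht => ?_
      have h1 : Real.exp (-l * t) ≤ 1 := by
        apply Real.exp_le_one_iff.mpr; nlinarith [ht.1]
      have h2 : t ^ θ ≤ T₀ ^ θ := Real.rpow_le_rpow ht.1.le ht.2.le hθ
      have h3 : (0:ℝ) ≤ t ^ θ := Real.rpow_nonneg ht.1.le θ
      rw [Real.norm_eq_abs, hg]
      rw [abs_of_nonneg (by positivity)]
      calc Real.exp (-l * t) * (Λ * t ^ θ) ≤ 1 * (Λ * t ^ θ) :=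
            mul_le_mul_of_nonneg_right h1 (by positivity)
        _ = Λ * t ^ θ := one_mul _
        _ ≤ Λ * T₀ ^ θ := mul_le_mul_of_nonneg_left h2 hΛ.le
  -- lower bound on A
  have hAlow : Λ * Real.exp (-2) * (l ^ θ)⁻¹ * l⁻¹ ≤ A := by
    have hstep1 : (∫ t in Set.Ioo (0:ℝ) T₀, g t) ≤ A := by
      rw [hA, intervalIntegral.integral_of_le hT₀.le,
        MeasureTheory.integral_Ioc_eq_integral_Ioo]
      refine integral_mono_ae hgint ?_ ?_
      · show IntegrableOn _ _ _
        rw [← integrableOn_Ioc_iff_integrableOn_Ioo,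
          ← intervalIntegrable_iff_integrableOn_Ioc_of_le hT₀.le]
        exact hint1
      · filter_upwards [hpos] with t ht
        exact mul_le_mul_of_nonneg_left ht (Real.exp_pos _).le
    have hsub : Set.Ioc (1/l) (2/l) ⊆ Set.Ioo (0:ℝ) T₀ := by
      intro t ht
      constructor
      · calc (0:ℝ) < 1/l := by positivity
          _ < t := ht.1
      · calc t ≤ 2/l := ht.2
          _ < T₀ := by
            rw [div_lt_iff₀ hl0]
            rw [div_lt_iff₀ hT₀] at hl2
            linarith
    have hstep2 : (∫ t in Set.Ioc (1/l) (2/l), g t) ≤ ∫ t in Set.Ioo (0:ℝ) T₀, g t := by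
      refine setIntegral_mono_set hgint ?_ (HasSubset.Subset.eventuallyLE hsub)
      exact (ae_restrict_iff' measurableSet_Ioo).mpr (Filter.Eventually.of_forall hgnonneg)
    have hstep3 : Λ * Real.exp (-2) * (l ^ θ)⁻¹ * l⁻¹ ≤
        ∫ t in Set.Ioc (1/l) (2/l), g t := by
      have hconst : ∀ t ∈ Set.Ioc (1/l) (2/l),
          Real.exp (-2) * (Λ * (l ^ θ)⁻¹) ≤ g t := by
        intro t ht
        have ht0 : 0 < t := lt_trans (by positivity) ht.1
        have he : Real.exp (-2) ≤ Real.exp (-l * t) := by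
          apply Real.exp_le_exp.mpr
          have : l * t ≤ 2 := by
            have := ht.2
            rw [le_div_iff₀ hl0] at this
            linarith
          linarith
        have hp : (l ^ θ)⁻¹ ≤ t ^ θ := by
          have h1l : (l⁻¹ : ℝ) ^ θ ≤ t ^ θ := by
            apply Real.rpow_le_rpow (by positivity) _ hθ
            rw [← one_div]
            exact ht.1.le
          rwa [Real.inv_rpow hl0.le] at h1l
        calc Real.exp (-2) * (Λ * (l ^ θ)⁻¹) ≤ Real.exp (-l * t) * (Λ * (l ^ θ)⁻¹) :=
              mul_le_mul_of_nonneg_right he (by positivity)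
          _ ≤ Real.exp (-l * t) * (Λ * t ^ θ) := by
              apply mul_le_mul_of_nonneg_left _ (Real.exp_pos _).le
              exact mul_le_mul_of_nonneg_left hp hΛ.le
      have hmeas : MeasurableSet (Set.Ioc (1/l) (2/l)) := measurableSet_Ioc
      have hfin : volume (Set.Ioc (1/l) (2/l)) ≠ ⊤ := by
        exact (measure_Ioc_lt_top).ne
      have := setIntegral_ge_of_const_le hmeas hfin hconst (hgint.mono_set hsub)
      have hvol : (volume (Set.Ioc (1/l) (2/l))).toReal = 1/l := by
        rw [Real.volume_Ioc, show (2/l - 1/l : ℝ) = 1/l by ring,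
          ENNReal.toReal_ofReal (by positivity)]
      rw [measureReal_def, hvol, smul_eq_mul, mul_comm (1/l)] at this
      calc Λ * Real.exp (-2) * (l ^ θ)⁻¹ * l⁻¹
          = Real.exp (-2) * (Λ * (l ^ θ)⁻¹) * (1/l) := by ring
        _ ≤ _ := this
    linarith
  -- tail bound
  have hBbound : |B| ≤ Real.exp (-T₀ * l) * C := by
    have hφIoc : IntegrableOn (fun t => |φ t|) (Set.Ioc T₀ T) := by
      rw [integrableOn_Ioc_iff_integrableOn_Ioo]
      exact hφT₀T
    have hEφIoc : IntegrableOn (fun t => Real.exp (-l * t) * φ t) (Set.Ioc T₀ T) := by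
      rw [← intervalIntegrable_iff_integrableOn_Ioc_of_le hT₀T]
      exact hint2
    calc |B| ≤ ∫ t in T₀..T, |Real.exp (-l * t) * φ t| :=
          intervalIntegral.abs_integral_le_integral_abs hT₀T
      _ = ∫ t in Set.Ioc T₀ T, |Real.exp (-l * t) * φ t| := by
          rw [intervalIntegral.integral_of_le hT₀T]
      _ ≤ ∫ t in Set.Ioc T₀ T, Real.exp (-T₀ * l) * |φ t| := by
          refine setIntegral_mono_on hEφIoc.abs (hφIoc.const_mul _) measurableSet_Ioc ?_
          intro t ht
          rw [abs_mul, abs_of_nonneg (Real.exp_pos _).le]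
          apply mul_le_mul_of_nonneg_right _ (abs_nonneg _)
          apply Real.exp_le_exp.mpr
          nlinarith [ht.1]
      _ = Real.exp (-T₀ * l) * ∫ t in Set.Ioc T₀ T, |φ t| := by
          rw [MeasureTheory.integral_const_mul]
      _ = Real.exp (-T₀ * l) * C := by
          rw [hC, MeasureTheory.integral_Ioc_eq_integral_Ioo]
  -- combine
  have hrpow : l ^ (θ + 1) = l ^ θ * l := by
    rw [Real.rpow_add hl0, Real.rpow_one]
  have hlθ : 0 < l ^ θ := Real.rpow_pos_of_pos hl0 θ
  have key : Λ * Real.exp (-2) ≤ l ^ (θ + 1) * A + l ^ (θ+1) * B + Λ * Real.exp (-2) / 2 := by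
    have h1 : Λ * Real.exp (-2) ≤ l ^ (θ + 1) * A := by
      calc Λ * Real.exp (-2)
          = (l ^ θ * l) * (Λ * Real.exp (-2) * (l ^ θ)⁻¹ * l⁻¹) := by
            field_simp
        _ ≤ (l ^ θ * l) * A := by
            apply mul_le_mul_of_nonneg_left hAlow (by positivity)
        _ = l ^ (θ + 1) * A := by rw [hrpow]
    have h2 : -(Λ * Real.exp (-2) / 2) ≤ l ^ (θ + 1) * B := by
      have : l ^ (θ + 1) * |B| ≤ Λ * Real.exp (-2) / 2 := by
        calc l ^ (θ + 1) * |B| ≤ l ^ (θ + 1) * (Real.exp (-T₀ * l) * C) := by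
              apply mul_le_mul_of_nonneg_left hBbound (by positivity)
          _ = l ^ (θ + 1) * Real.exp (-T₀ * l) * C := by ring
          _ ≤ Λ * Real.exp (-2) / 2 := htl.le
      have habs : -(l ^ (θ + 1) * |B|) ≤ l ^ (θ + 1) * B := by
        rw [← mul_neg]
        exact mul_le_mul_of_nonneg_left (neg_abs_le B) (by positivity)
      linarith
    linarith
  rw [hsplit]
  have habs : A + B ≤ |A + B| := le_abs_self _
  have hfinal : Λ * Real.exp (-2) / 2 ≤ l ^ (θ + 1) * (A + B) := by
    have := key
    nlinarith
  calc Λ * Real.exp (-2) / 2 ≤ l ^ (θ + 1) * (A + B) := hfinal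
    _ ≤ l ^ (θ + 1) * |A + B| := mul_le_mul_of_nonneg_left habs (by positivity)

/-- Lemma 3 (second part): if `φ ∈ L¹(0,T)` satisfies condition (H) with exponent `θ ≥ 0`, then
`liminf_{λ → +∞} λ^{θ+1} |∫₀ᵀ e^{−λt} φ(t) dt| > 0` (the liminf taken in the extended reals). -/
theorem stmt5
    (T : ℝ) (hT : 0 < T)
    (φ : ℝ → ℝ) (hφ : IntegrableOn φ (Set.Ioo 0 T))
    (θ : ℝ) (hθ : 0 ≤ θ)
    (hH : ∃ T₀ Λ : ℝ, T₀ ∈ Set.Ioc 0 T ∧ 0 < Λ ∧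
      ((∀ᵐ t ∂(MeasureTheory.volume.restrict (Set.Ioo (0:ℝ) T₀)), Λ * t ^ θ ≤ φ t) ∨
       (∀ᵐ t ∂(MeasureTheory.volume.restrict (Set.Ioo (0:ℝ) T₀)), φ t ≤ -(Λ * t ^ θ)))) :
    (0 : EReal) < Filter.liminf
      (fun l : ℝ =>
        ((l ^ (θ + 1) * |∫ t in (0:ℝ)..T, Real.exp (-l * t) * φ t| : ℝ) : EReal))
      Filter.atTop := by
  obtain ⟨T₀, Λ, hT₀, hΛ, hcase⟩ := hH
  have hε : (0:ℝ) < Λ * Real.exp (-2) / 2 := by positivity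
  have hev : ∀ᶠ l in atTop, Λ * Real.exp (-2) / 2 ≤
      l ^ (θ + 1) * |∫ t in (0:ℝ)..T, Real.exp (-l * t) * φ t| := by
    rcases hcase with hpos | hneg
    · exact aux5 T T₀ Λ hT₀.1 hT₀.2 hΛ φ hφ θ hθ hpos
    · have h := aux5 T T₀ Λ hT₀.1 hT₀.2 hΛ (fun t => -φ t) hφ.neg θ hθ
        (by filter_upwards [hneg] with t ht; linarith)
      filter_upwards [h] with l hl
      have : (∫ t in (0:ℝ)..T, Real.exp (-l * t) * (-φ t)) =
          -(∫ t in (0:ℝ)..T, Real.exp (-l * t) * φ t) := by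
        rw [← intervalIntegral.integral_neg]
        congr 1; ext t; ring
      rw [this, abs_neg] at hl
      exact hl
  have hle : ((Λ * Real.exp (-2) / 2 : ℝ) : EReal) ≤ Filter.liminf
      (fun l : ℝ =>
        ((l ^ (θ + 1) * |∫ t in (0:ℝ)..T, Real.exp (-l * t) * φ t| : ℝ) : EReal))
      Filter.atTop := by
    refine Filter.le_liminf_of_le (by isBoundedDefault) ?_
    filter_upwards [hev] with l hl
    exact_mod_cast hl
  calc (0 : EReal) < ((Λ * Real.exp (-2) / 2 : ℝ) : EReal) := by exact_mod_cast hε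
    _ ≤ _ := hle
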